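/- For 1 ≤ i ≤ n, let f ∈ 𝔫* be the coordinate functional x ↦ x_{i, 2n+1−i}. Then the rank of the alternating bilinear form B_f(x,y) = f(xy − yx) on 𝔫 equals 2(n − i). (Equivalently, the coadjoint orbit of the dual root vector e*_{2ε_i} for the nilradical of a Borel subalgebra of 𝔰𝔭_{2n}(F) has dimension |Sing(2ε_i)| = 2(n − i).) -/

import Mathlib

open Matrix

/-- The Gram matrix of the symplectic form `β` on `F^{2n}`:
`S_{a, 2n+1-a} = 1` for `1 ≤ a ≤ n`, `S_{a, 2n+1-a} = -1` for `n+1 ≤ a ≤ 2n`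
(written 0-based). -/
noncomputable def sympS (F : Type*) [Field F] (n : ℕ) :
    Matrix (Fin (2 * n)) (Fin (2 * n)) F :=
  Matrix.of fun a b =>
    if (a : ℕ) + (b : ℕ) = 2 * n - 1 then (if (a : ℕ) < n then 1 else -1) else 0

/-- The nilradical `𝔫` of the Borel subalgebra of upper triangular matrices in
`𝔰𝔭_{2n}(F)`: strictly upper triangular matrices `x` with `xᵀ S + S x = 0`. -/
noncomputable def spNilradical (F : Type*) [Field F] (n : ℕ) :
    Submodule F (Matrix (Fin (2 * n)) (Fin (2 * n)) F) where
  carrier := {x | (∀ i j : Fin (2 * n), j ≤ i → x i j = 0) ∧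
    xᵀ * sympS F n + sympS F n * x = 0}
  add_mem' := by
    intro x y hx hy
    refine ⟨fun i j hij => ?_, ?_⟩
    · show x i j + y i j = 0
      rw [hx.1 i j hij, hy.1 i j hij, add_zero]
    · have h : (x + y)ᵀ * sympS F n + sympS F n * (x + y)
          = (xᵀ * sympS F n + sympS F n * x) + (yᵀ * sympS F n + sympS F n * y) := by
        rw [Matrix.transpose_add, Matrix.add_mul, Matrix.mul_add]
        abel
      rw [h, hx.2, hy.2, add_zero]
  zero_mem' := by
    refine ⟨fun i j _ => rfl, ?_⟩
    simp
  smul_mem' := by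
    intro c x hx
    refine ⟨fun i j hij => ?_, ?_⟩
    · show c * x i j = 0
      rw [hx.1 i j hij, mul_zero]
    · have h : (c • x)ᵀ * sympS F n + sympS F n * (c • x)
          = c • (xᵀ * sympS F n + sympS F n * x) := by
        rw [Matrix.transpose_smul, Matrix.smul_mul, Matrix.mul_smul, smul_add]
      rw [h, hx.2, smul_zero]

/-- The alternating bilinear form `B_f(x, y) = f(xy - yx)` on `𝔫`, for the coordinate
functional `f : x ↦ x_{i'j'}`. -/
noncomputable def spBform (F : Type*) [Field F] (n : ℕ) (i' j' : Fin (2 * n)) :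
    spNilradical F n →ₗ[F] spNilradical F n →ₗ[F] F :=
  LinearMap.mk₂ F
    (fun x y => ((x : Matrix (Fin (2 * n)) (Fin (2 * n)) F) * y
      - (y : Matrix (Fin (2 * n)) (Fin (2 * n)) F) * x) i' j')
    (fun x x' y => by
      simp only [Submodule.coe_add, Matrix.add_mul, Matrix.mul_add,
        Matrix.sub_apply, Matrix.add_apply]
      ring)
    (fun c x y => by
      simp only [Submodule.coe_smul, Matrix.smul_mul, Matrix.mul_smul,
        Matrix.sub_apply, Matrix.smul_apply, smul_eq_mul]
      ring)
    (fun x y y' => by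
      simp only [Submodule.coe_add, Matrix.add_mul, Matrix.mul_add,
        Matrix.sub_apply, Matrix.add_apply]
      ring)
    (fun c x y => by
      simp only [Submodule.coe_smul, Matrix.smul_mul, Matrix.mul_smul,
        Matrix.sub_apply, Matrix.smul_apply, smul_eq_mul]
      ring)

section Aux
variable {F : Type*} [Field F] {n : ℕ}

def rv (a : Fin (2*n)) : Fin (2*n) := ⟨2*n-1-(a:ℕ), by have := a.2; omega⟩

@[simp] lemma rv_val (a : Fin (2*n)) : ((rv a : Fin (2*n)) : ℕ) = 2*n-1-(a:ℕ) := rfl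

lemma sympS_mul_apply (x : Matrix (Fin (2*n)) (Fin (2*n)) F) (a b : Fin (2*n)) :
    (sympS F n * x) a b = (if (a:ℕ) < n then (1:F) else -1) * x (rv a) b := by
  rw [Matrix.mul_apply, Finset.sum_eq_single (rv a)]
  · congr 1
    have h : (a:ℕ) + ((rv a : Fin (2*n)) : ℕ) = 2*n-1 := by
      have := a.2; simp [rv]; omega
    show (if _ then _ else (0:F)) = _
    rw [if_pos h]
  · intro c _ hc
    have h : (a:ℕ) + (c:ℕ) ≠ 2*n-1 := by
      intro h; apply hc; apply Fin.ext; have := a.2; simp [rv]; omega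
    show (if (a:ℕ)+(c:ℕ) = 2*n-1 then (if (a:ℕ) < n then (1:F) else -1) else 0) * x c b = 0
    rw [if_neg h, zero_mul]
  · intro h; exact absurd (Finset.mem_univ _) h

lemma transpose_mul_sympS_apply (x : Matrix (Fin (2*n)) (Fin (2*n)) F) (a b : Fin (2*n)) :
    (xᵀ * sympS F n) a b = (if (b:ℕ) < n then (-1:F) else 1) * x (rv b) a := by
  rw [Matrix.mul_apply, Finset.sum_eq_single (rv b)]
  · rw [Matrix.transpose_apply, mul_comm]
    congr 1
    have h : ((rv b : Fin (2*n)) : ℕ) + (b:ℕ) = 2*n-1 := by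
      have := b.2; simp [rv]; omega
    have h2 : (((rv b : Fin (2*n)) : ℕ) < n) ↔ ¬ ((b:ℕ) < n) := by
      have := b.2; simp [rv]; omega
    show (if _ then _ else (0:F)) = _
    rw [if_pos h]
    by_cases hb : (b:ℕ) < n
    · rw [if_neg (by rw [h2]; exact not_not_intro hb), if_pos hb]
    · rw [if_pos (h2.mpr hb), if_neg hb]
  · intro c _ hc
    have h : (c:ℕ) + (b:ℕ) ≠ 2*n-1 := by
      intro h; apply hc; apply Fin.ext; have := b.2; simp [rv]; omega
    show xᵀ a c * (if (c:ℕ)+(b:ℕ) = 2*n-1 then (if (c:ℕ) < n then (1:F) else -1) else 0) = 0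
    rw [if_neg h, mul_zero]
  · intro h; exact absurd (Finset.mem_univ _) h

/-- The symplectic relation entrywise. -/
lemma sp_rel {x : Matrix (Fin (2*n)) (Fin (2*n)) F}
    (hx : xᵀ * sympS F n + sympS F n * x = 0) (a b : Fin (2*n)) :
    (if (b:ℕ) < n then (-1:F) else 1) * x (rv b) a
      + (if (a:ℕ) < n then (1:F) else -1) * x (rv a) b = 0 := by
  have := congrFun (congrFun hx a) b
  rwa [Matrix.add_apply, sympS_mul_apply, transpose_mul_sympS_apply, Matrix.zero_apply] at this

lemma sp_of_rel {x : Matrix (Fin (2*n)) (Fin (2*n)) F}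
    (h : ∀ a b : Fin (2*n), (if (b:ℕ) < n then (-1:F) else 1) * x (rv b) a
      + (if (a:ℕ) < n then (1:F) else -1) * x (rv a) b = 0) :
    xᵀ * sympS F n + sympS F n * x = 0 := by
  ext a b
  rw [Matrix.add_apply, sympS_mul_apply, transpose_mul_sympS_apply, Matrix.zero_apply]
  exact h a b


variable (F n) in
/-- Index set of the "singular" roots. -/
abbrev KK (i : ℕ) := {k : Fin (2*n) // i < (k:ℕ) ∧ (k:ℕ) < 2*n-1-i}

def jmap (i : ℕ) (k : KK n i) : KK n i :=
  ⟨rv k.1, by have := k.2; have := k.1.2; constructor <;> simp [rv] <;> omega⟩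

@[simp] lemma jmap_jmap (i : ℕ) (k : KK n i) : jmap i (jmap i k) = k := by
  apply Subtype.ext; apply Fin.ext
  have := k.1.2; have := k.2
  simp [jmap, rv]; omega

lemma jmap_inj (i : ℕ) : Function.Injective (jmap (n := n) i) := by
  intro a b h
  have := congrArg (jmap i) h
  rwa [jmap_jmap, jmap_jmap] at this

variable (F) in
/-- Projection onto the coordinates `x_{i,k}`, `i < k < 2n-1-i`. -/
def piLin (i : ℕ) (hi : i < n) : spNilradical F n →ₗ[F] (KK n i → F) where
  toFun x k := (x : Matrix (Fin (2*n)) (Fin (2*n)) F) ⟨i, by omega⟩ k.1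
  map_add' x y := by funext k; simp
  map_smul' c x := by funext k; simp

variable (F) in
/-- The model symplectic form on `KK n i → F`. -/
def gLin (i : ℕ) : (KK n i → F) →ₗ[F] (KK n i → F) →ₗ[F] F :=
  LinearMap.mk₂ F
    (fun u v => ∑ k : KK n i, (if ((k.1 : Fin (2*n)) : ℕ) < n then (1:F) else -1) *
        (u k * v (jmap i k) - v k * u (jmap i k)))
    (fun u u' v => by
      rw [← Finset.sum_add_distrib]
      refine Finset.sum_congr rfl fun k _ => ?_
      simp only [Pi.add_apply]; ring)
    (fun c u v => by
      simp only [smul_eq_mul]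
      rw [Finset.mul_sum]
      refine Finset.sum_congr rfl fun k _ => ?_
      simp only [Pi.smul_apply, smul_eq_mul]; ring)
    (fun u v v' => by
      rw [← Finset.sum_add_distrib]
      refine Finset.sum_congr rfl fun k _ => ?_
      simp only [Pi.add_apply]; ring)
    (fun c u v => by
      simp only [smul_eq_mul]
      rw [Finset.mul_sum]
      refine Finset.sum_congr rfl fun k _ => ?_
      simp only [Pi.smul_apply, smul_eq_mul]; ring)

variable (F) in
/-- The root-vector matrix with `1` in entry `(i,k)`. -/
def Wmat (i : ℕ) (k : KK n i) : Matrix (Fin (2*n)) (Fin (2*n)) F :=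
  Matrix.of fun a b =>
    if (a:ℕ) = i ∧ (b:ℕ) = (k.1:ℕ) then 1
    else if (a:ℕ) = 2*n-1-(k.1:ℕ) ∧ (b:ℕ) = 2*n-1-i then
      -(if ((k.1 : Fin (2*n)) : ℕ) < n then (1:F) else -1)
    else 0

lemma Wmat_mem (i : ℕ) (hi : i < n) (k : KK n i) : Wmat F i k ∈ spNilradical F n := by
  have hk1 := k.1.2
  have hk2 := k.2
  constructor
  · intro a b hab
    rw [Fin.le_def] at hab
    show (if (a:ℕ) = i ∧ (b:ℕ) = (k.1:ℕ) then (1:F)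
      else if (a:ℕ) = 2*n-1-(k.1:ℕ) ∧ (b:ℕ) = 2*n-1-i then
        -(if ((k.1 : Fin (2*n)) : ℕ) < n then (1:F) else -1)
      else 0) = 0
    split_ifs with h1 h2 <;> first | rfl | (exfalso; omega)
  · apply sp_of_rel
    intro a b
    have ha := a.2; have hb := b.2
    show (if (b:ℕ) < n then (-1:F) else 1) * (if ((rv b : Fin (2*n)):ℕ) = i ∧ (a:ℕ) = (k.1:ℕ) then 1
        else if ((rv b : Fin (2*n)):ℕ) = 2*n-1-(k.1:ℕ) ∧ (a:ℕ) = 2*n-1-i then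
          -(if ((k.1 : Fin (2*n)) : ℕ) < n then (1:F) else -1) else 0)
      + (if (a:ℕ) < n then (1:F) else -1) * (if ((rv a : Fin (2*n)):ℕ) = i ∧ (b:ℕ) = (k.1:ℕ) then 1
        else if ((rv a : Fin (2*n)):ℕ) = 2*n-1-(k.1:ℕ) ∧ (b:ℕ) = 2*n-1-i then
          -(if ((k.1 : Fin (2*n)) : ℕ) < n then (1:F) else -1) else 0) = 0
    simp only [rv_val]
    by_cases hb' : (b:ℕ) < n <;> by_cases ha' : (a:ℕ) < n <;>
      by_cases hkn : ((k.1 : Fin (2*n)) : ℕ) < n <;> simp only [hb', ha', hkn, if_true, if_false] <;>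
      split_ifs <;> try ring
    all_goals exfalso
    all_goals omega

lemma piLin_Wmat (i : ℕ) (hi : i < n) (k : KK n i) :
    piLin F i hi ⟨Wmat F i k, Wmat_mem i hi k⟩ = Pi.single k 1 := by
  funext t
  have hk1 := k.1.2; have hk2 := k.2; have ht := t.2
  show (if (i:ℕ) = i ∧ ((t.1 : Fin (2*n)):ℕ) = (k.1:ℕ) then (1:F)
      else if (i:ℕ) = 2*n-1-(k.1:ℕ) ∧ ((t.1:Fin (2*n)):ℕ) = 2*n-1-i then _ else 0) = _
  rw [Pi.single_apply]
  by_cases h : t = k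
  · subst h
    rw [if_pos ⟨rfl, rfl⟩, if_pos rfl]
  · have hne : ((t.1 : Fin (2*n)):ℕ) ≠ (k.1:ℕ) := by
      intro hc; exact h (Subtype.ext (Fin.ext hc))
    rw [if_neg (by tauto), if_neg (by omega), if_neg h]

lemma piLin_surj (i : ℕ) (hi : i < n) : Function.Surjective (piLin F i hi) := by
  intro u
  have : u ∈ LinearMap.range (piLin F i hi) := by
    have hu : ∑ k : KK n i, Pi.single k (u k) = u := Finset.univ_sum_single u
    rw [← hu]
    refine Submodule.sum_mem _ fun k _ => ?_
    refine ⟨u k • ⟨Wmat F i k, Wmat_mem i hi k⟩, ?_⟩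
    rw [_root_.map_smul, piLin_Wmat]
    funext t
    simp only [Pi.smul_apply, Pi.single_apply, smul_eq_mul]
    split_ifs <;> simp
  obtain ⟨x, hx⟩ := this
  exact ⟨x, hx⟩

lemma entry_rel (i : ℕ) (hi : i < n) {x : Matrix (Fin (2*n)) (Fin (2*n)) F}
    (hx : xᵀ * sympS F n + sympS F n * x = 0) (t : Fin (2*n)) :
    x t ⟨2*n-1-i, by have := t.2; omega⟩
      = (if (t:ℕ) < n then (1:F) else -1) * x ⟨i, by have := t.2; omega⟩ (rv t) := by
  have ht := t.2
  have h := sp_rel hx (rv t) ⟨2*n-1-i, by omega⟩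
  have e1 : rv (⟨2*n-1-i, by omega⟩ : Fin (2*n)) = (⟨i, by omega⟩ : Fin (2*n)) := by
    apply Fin.ext; simp [rv]; omega
  have e2 : rv (rv t) = t := by apply Fin.ext; simp [rv]; omega
  rw [e1, e2] at h
  rw [if_neg (show ¬ ((⟨2*n-1-i, by omega⟩ : Fin (2*n)) : ℕ) < n by simp; omega),
    one_mul] at h
  by_cases hc : (t:ℕ) < n
  · rw [if_pos hc]
    rw [if_neg (show ¬ ((rv t : Fin (2*n)):ℕ) < n by simp [rv]; omega)] at h
    linear_combination -h
  · rw [if_neg hc]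
    rw [if_pos (show ((rv t : Fin (2*n)):ℕ) < n by simp [rv]; omega)] at h
    linear_combination h

lemma gLin_apply (i : ℕ) (u v : KK n i → F) :
    gLin F i u v = ∑ k : KK n i, (if ((k.1 : Fin (2*n)) : ℕ) < n then (1:F) else -1) *
        (u k * v (jmap i k) - v k * u (jmap i k)) := rfl


lemma B_eq (i : ℕ) (hi : i < n) (x y : spNilradical F n) :
    spBform F n ⟨i, by omega⟩ ⟨2*n-1-i, by omega⟩ x y
      = gLin F i (piLin F i hi x) (piLin F i hi y) := by
  obtain ⟨hx1, hx2⟩ := x.2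
  obtain ⟨hy1, hy2⟩ := y.2
  have lhs : spBform F n ⟨i, by omega⟩ ⟨2*n-1-i, by omega⟩ x y
      = ∑ t : Fin (2*n), ((x : Matrix (Fin (2*n)) (Fin (2*n)) F) ⟨i, by omega⟩ t *
          (y : Matrix (Fin (2*n)) (Fin (2*n)) F) t ⟨2*n-1-i, by omega⟩
        - (y : Matrix (Fin (2*n)) (Fin (2*n)) F) ⟨i, by omega⟩ t *
          (x : Matrix (Fin (2*n)) (Fin (2*n)) F) t ⟨2*n-1-i, by omega⟩) := by
    show ((x : Matrix (Fin (2*n)) (Fin (2*n)) F) * y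
      - (y : Matrix (Fin (2*n)) (Fin (2*n)) F) * x) _ _ = _
    rw [Matrix.sub_apply, Matrix.mul_apply, Matrix.mul_apply, ← Finset.sum_sub_distrib]
  rw [lhs]
  have key : ∀ t : Fin (2*n),
      ((x : Matrix (Fin (2*n)) (Fin (2*n)) F) ⟨i, by omega⟩ t *
          (y : Matrix (Fin (2*n)) (Fin (2*n)) F) t ⟨2*n-1-i, by omega⟩
        - (y : Matrix (Fin (2*n)) (Fin (2*n)) F) ⟨i, by omega⟩ t *
          (x : Matrix (Fin (2*n)) (Fin (2*n)) F) t ⟨2*n-1-i, by omega⟩)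
      = if i < (t:ℕ) ∧ (t:ℕ) < 2*n-1-i then
          (if (t:ℕ) < n then (1:F) else -1) *
            ((x : Matrix (Fin (2*n)) (Fin (2*n)) F) ⟨i, by omega⟩ t *
              (y : Matrix (Fin (2*n)) (Fin (2*n)) F) ⟨i, by omega⟩ (rv t)
            - (y : Matrix (Fin (2*n)) (Fin (2*n)) F) ⟨i, by omega⟩ t *
              (x : Matrix (Fin (2*n)) (Fin (2*n)) F) ⟨i, by omega⟩ (rv t))
        else 0 := by
    intro t
    have ht := t.2
    by_cases hp : i < (t:ℕ) ∧ (t:ℕ) < 2*n-1-i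
    · rw [if_pos hp, entry_rel i hi hx2 t, entry_rel i hi hy2 t]
      ring
    · rw [if_neg hp]
      push_neg at hp
      rcases le_or_gt (t:ℕ) i with hle | hgt
      · rw [hx1 ⟨i, by omega⟩ t (by rw [Fin.le_def]; exact hle),
          hy1 ⟨i, by omega⟩ t (by rw [Fin.le_def]; exact hle)]
        ring
      · have hle2 : 2*n-1-i ≤ (t:ℕ) := hp hgt
        rw [hx1 t ⟨2*n-1-i, by omega⟩ (by rw [Fin.le_def]; exact hle2),
          hy1 t ⟨2*n-1-i, by omega⟩ (by rw [Fin.le_def]; exact hle2)]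
        ring
  rw [Finset.sum_congr rfl (fun t _ => key t), ← Finset.sum_filter]
  rw [Finset.sum_subtype (p := fun t : Fin (2*n) => i < (t:ℕ) ∧ (t:ℕ) < 2*n-1-i)
      (Finset.univ.filter (fun t : Fin (2*n) => i < (t:ℕ) ∧ (t:ℕ) < 2*n-1-i))
      (by simp) _]
  rw [gLin_apply]
  exact Finset.sum_congr rfl (fun k _ => rfl)

lemma jmap_ne (i : ℕ) (k : KK n i) : jmap i k ≠ k := by
  intro h
  have := congrArg (fun z : KK n i => ((z.1 : Fin (2*n)) : ℕ)) h
  have hk := k.1.2; have hk2 := k.2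
  simp [jmap, rv] at this
  omega

lemma gLin_inj [CharZero F] (i : ℕ) : Function.Injective (gLin F (n := n) i) := by
  intro u v huv
  have h : gLin F (n := n) i (u - v) = 0 := by rw [map_sub, huv, sub_self]
  suffices hz : u - v = 0 by
    funext k; have := congrFun hz k; simpa [sub_eq_zero] using this
  set w := u - v with hw
  funext k₀
  have h0 : gLin F (n := n) i w ((Pi.single (jmap i k₀) (1:F) : KK n i → F)) = 0 := by
    rw [h]; rfl
  rw [gLin_apply] at h0
  set c : F := if ((k₀.1 : Fin (2*n)) : ℕ) < n then (1:F) else -1 with hc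
  have hne : jmap i k₀ ≠ k₀ := jmap_ne i k₀
  have hflip : (if (((jmap i k₀).1 : Fin (2*n)) : ℕ) < n then (1:F) else -1) = -c := by
    have hk := k₀.1.2; have hk2 := k₀.2
    have : (((jmap i k₀).1 : Fin (2*n)) : ℕ) = 2*n-1-((k₀.1 : Fin (2*n)) : ℕ) := rfl
    rw [hc, this]
    split_ifs <;> try ring
    all_goals exfalso
    all_goals omega
  have hsum : ∀ k : KK n i, (if ((k.1 : Fin (2*n)) : ℕ) < n then (1:F) else -1) *
      (w k * (Pi.single (jmap i k₀) (1:F) : KK n i → F) (jmap i k)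
        - (Pi.single (jmap i k₀) (1:F) : KK n i → F) k * w (jmap i k))
      = (if k = k₀ then c * w k₀ else 0) + (if k = jmap i k₀ then c * w k₀ else 0) := by
    intro k
    simp only [Pi.single_apply, jmap_jmap]
    by_cases hk : k = k₀
    · subst hk
      rw [if_pos rfl, if_neg (Ne.symm hne), if_pos rfl, if_neg (Ne.symm hne), ← hc]
      ring
    · by_cases hk2 : k = jmap i k₀
      · subst hk2
        simp only [jmap_jmap]
        rw [hflip, if_neg (fun hh : jmap i k₀ = k₀ => hne hh),
          if_neg (fun hh : k₀ = jmap i k₀ => hne hh.symm)]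
        simp only [if_true]
        ring
      · rw [if_neg (fun hh => hk (jmap_inj i hh)), if_neg hk2, if_neg hk, if_neg hk2]
        ring
  rw [Finset.sum_congr rfl (fun k _ => hsum k), Finset.sum_add_distrib,
    Finset.sum_ite_eq' Finset.univ k₀ (fun _ => c * w k₀),
    Finset.sum_ite_eq' Finset.univ (jmap i k₀) (fun _ => c * w k₀),
    if_pos (Finset.mem_univ _), if_pos (Finset.mem_univ _)] at h0
  have h2 : c * w k₀ + c * w k₀ = 0 := h0
  show w k₀ = 0
  have h2' : (2:F) * (c * w k₀) = 0 := by linear_combination h2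
  rcases mul_eq_zero.mp h2' with h3 | h3
  · exact absurd h3 (by norm_num : (2:F) ≠ 0)
  rcases mul_eq_zero.mp h3 with h4 | h4
  · exfalso; rw [hc] at h4; revert h4; split_ifs <;> simp
  · exact h4

def kkEquiv (i : ℕ) : KK n i ≃ Fin (2*(n-1-i)) where
  toFun k := ⟨((k.1 : Fin (2*n)) : ℕ) - i - 1, by have := k.2; have := k.1.2; omega⟩
  invFun t := ⟨⟨i+1+(t:ℕ), by have := t.2; omega⟩, by
    constructor
    · show i < i+1+(t:ℕ); omega
    · show i+1+(t:ℕ) < 2*n-1-i; have := t.2; omega⟩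
  left_inv k := by
    apply Subtype.ext; apply Fin.ext
    show i+1+(((k.1 : Fin (2*n)) : ℕ) - i - 1) = _
    have := k.2; omega
  right_inv t := by
    apply Fin.ext
    show i+1+(t:ℕ) - i - 1 = (t:ℕ)
    omega

end Aux


set_option synthInstance.maxHeartbeats 1000000 in
set_option maxHeartbeats 2000000 in
/-- For `f ∈ 𝔫*` the coordinate functional `x ↦ x_{i, 2n+1-i}` (written 0-based as
`x_{i, 2n-1-i}`), the rank of the alternating form `B_f(x, y) = f(xy - yx)` on the
nilradical of a Borel subalgebra of `𝔰𝔭_{2n}(F)` equals `2(n - i)` (0-based: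
`2(n - 1 - i)`), the dimension of the coadjoint orbit of `e*_{2ε_i}`. -/
theorem rank_spBform_long_root (F : Type*) [Field F] [CharZero F]
    (n : ℕ) (hn : 1 ≤ n) (i : Fin n) :
    Module.finrank F (LinearMap.range
        (spBform F n ⟨(i : ℕ), by have := i.isLt; omega⟩
          ⟨2 * n - 1 - (i : ℕ), by have := i.isLt; omega⟩)) =
      2 * (n - 1 - (i : ℕ)) := by
  have hi : (i : ℕ) < n := i.isLt
  have hL : spBform F n ⟨(i : ℕ), by have := i.isLt; omega⟩
        ⟨2 * n - 1 - (i : ℕ), by have := i.isLt; omega⟩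
      = (piLin F (i:ℕ) hi).dualMap.comp
          ((gLin F (n := n) (i:ℕ)).comp (piLin F (i:ℕ) hi)) := by
    apply LinearMap.ext; intro x; apply LinearMap.ext; intro y
    exact B_eq (i:ℕ) hi x y
  have hinj : Function.Injective (piLin F (i:ℕ) hi).dualMap :=
    LinearMap.dualMap_injective_of_surjective (piLin_surj (i:ℕ) hi)
  have e1 : Module.finrank F (Submodule.map (piLin F (i:ℕ) hi).dualMap
        (LinearMap.range ((gLin F (n := n) (i:ℕ)).comp (piLin F (i:ℕ) hi))))
      = Module.finrank F
        (LinearMap.range ((gLin F (n := n) (i:ℕ)).comp (piLin F (i:ℕ) hi))) :=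
    (LinearEquiv.finrank_eq (Submodule.equivMapOfInjective
      ((piLin F (i:ℕ) hi).dualMap) hinj
      (LinearMap.range ((gLin F (n := n) (i:ℕ)).comp (piLin F (i:ℕ) hi))))).symm
  rw [hL, LinearMap.range_comp, e1,
    LinearMap.range_comp (piLin F (i:ℕ) hi) (gLin F (n := n) (i:ℕ)),
    LinearMap.range_eq_top.mpr (piLin_surj (i:ℕ) hi), Submodule.map_top]
  rw [LinearMap.finrank_range_of_inj (gLin_inj (i:ℕ))]
  rw [Module.finrank_pi]
  rw [Fintype.card_congr (kkEquiv (i:ℕ)), Fintype.card_fin]
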